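/- For every γ ∈ (0,2), setting Q = γ/2 + 2/γ, and for every complex number z with 0 < Re z < Q, the function t ↦ ( (Q/2 − z)² e^{−t} − sinh²((Q/2 − z)t/2) / ( sinh(γt/4) · sinh(t/γ) ) ) / t is (Bochner/Lebesgue) integrable on (0,∞). (This integral defines ln Υ_{γ/2}(z) on the strip 0 < Re z < Q.) -/

import Mathlib

open MeasureTheory Set

lemma norm_sinh_le_exp (w : ℂ) : ‖Complex.sinh w‖ ≤ Real.exp |w.re| := by
  rw [show Complex.sinh w = (Complex.exp w - Complex.exp (-w)) / 2 from rfl]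
  have h1 : ‖Complex.exp w‖ = Real.exp w.re := Complex.norm_exp w
  have h2 : ‖Complex.exp (-w)‖ = Real.exp (-w.re) :=
    (Complex.norm_exp (-w)).trans (by simp)
  calc ‖(Complex.exp w - Complex.exp (-w)) / 2‖
      ≤ (‖Complex.exp w‖ + ‖Complex.exp (-w)‖) / 2 := by
        rw [norm_div]; simp only [Complex.norm_ofNat]
        gcongr; exact norm_sub_le _ _
    _ ≤ Real.exp |w.re| := by
        rw [h1, h2]
        have := Real.exp_le_exp.2 (le_abs_self w.re)
        have := Real.exp_le_exp.2 (neg_le_abs w.re)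
        linarith

lemma real_sinh_lower {x₀ x : ℝ} (h : x₀ ≤ x) :
    (1 - Real.exp (-(2*x₀)))/2 * Real.exp x ≤ Real.sinh x := by
  rw [Real.sinh_eq]
  have h1 : Real.exp (-x) = Real.exp x * Real.exp (-(2*x)) := by
    rw [← Real.exp_add]; ring_nf
  have h2 : Real.exp (-(2*x)) ≤ Real.exp (-(2*x₀)) := Real.exp_le_exp.2 (by linarith)
  have h3 : (0:ℝ) < Real.exp x := Real.exp_pos x
  rw [h1]; nlinarith

lemma norm_sinh_sub_self (w : ℂ) : ‖Complex.sinh w - w‖ ≤ 2 * ‖w‖^3 * Real.exp ‖w‖ := by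
  have hexp1 : (1:ℝ) ≤ Real.exp ‖w‖ := Real.one_le_exp (norm_nonneg w)
  rcases le_or_gt ‖w‖ 1 with h | h
  · have hb1 := Complex.exp_bound (x := w) h (n := 4) (by norm_num)
    have hb2 := Complex.exp_bound (x := -w) (by simpa using h) (n := 4) (by norm_num)
    have hs1 : ∀ x : ℂ, ∑ m ∈ Finset.range 4, x ^ m / m.factorial
        = 1 + x + x^2/2 + x^3/6 := by
      intro x
      simp [Finset.sum_range_succ, Nat.factorial]
    rw [hs1] at hb1 hb2
    rw [norm_neg] at hb2
    norm_num [Nat.factorial] at hb1 hb2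
    have key : Complex.sinh w - w =
        ((Complex.exp w - (1 + w + w^2/2 + w^3/6))
          - (Complex.exp (-w) - (1 + -w + w^2/2 + (-w)^3/6)))/2 + w^3/6 := by
      rw [show Complex.sinh w = (Complex.exp w - Complex.exp (-w))/2 from rfl]; ring
    have h4 : ‖w‖^4 ≤ ‖w‖^3 := by
      calc ‖w‖^4 = ‖w‖^3 * ‖w‖ := by ring
      _ ≤ ‖w‖^3 * 1 := by gcongr
      _ = ‖w‖^3 := by ring
    have hn : ‖Complex.sinh w - w‖ ≤ (‖w‖^4 * (5/96) + ‖w‖^4 * (5/96))/2 + ‖w‖^3/6 := by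
      rw [key]
      refine (norm_add_le _ _).trans ?_
      gcongr
      · rw [norm_div]
        simp only [Complex.norm_ofNat]
        gcongr
        exact (norm_sub_le _ _).trans (add_le_add hb1 hb2)
      · rw [norm_div, norm_pow]; simp
    have hw3 : (0:ℝ) ≤ ‖w‖^3 := by positivity
    nlinarith
  · have h1 : ‖Complex.sinh w‖ ≤ Real.exp ‖w‖ :=
      (norm_sinh_le_exp w).trans (Real.exp_le_exp.2 (Complex.abs_re_le_norm w))
    have h2 : ‖w‖ ≤ Real.exp ‖w‖ := by
      have := Real.add_one_le_exp ‖w‖; linarith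
    have h3 : (1:ℝ) ≤ ‖w‖^3 := one_le_pow₀ h.le
    have := norm_sub_le (Complex.sinh w) w
    nlinarith [Real.exp_pos ‖w‖]


lemma norm_sub_sub_le (x y z : ℂ) : ‖x - y - z‖ ≤ ‖x‖ + ‖y‖ + ‖z‖ := by
  have h1 := norm_sub_le (x - y) z
  have h2 := norm_sub_le x y
  linarith

lemma sinh_err {w : ℂ} {m t : ℝ} (ht0 : 0 < t) (ht1 : t ≤ 1) (hm : 0 ≤ m)
    (hw : ‖w‖ = m * t) :
    ‖Complex.sinh w - w‖ ≤ (2*m^3*Real.exp m) * t^3 := by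
  have h := norm_sinh_sub_self w
  rw [hw] at h
  have hmt : m * t ≤ m := by nlinarith
  have h2 : ‖Complex.sinh w - w‖ ≤ 2*(m*t)^3*Real.exp m := by
    refine h.trans ?_
    exact mul_le_mul_of_nonneg_left (Real.exp_le_exp.2 hmt) (by positivity)
  exact h2.trans (le_of_eq (by ring))

set_option maxHeartbeats 1000000

/-- For every `γ ∈ (0,2)`, with `Q = γ/2 + 2/γ`, and every complex `z`
with `0 < Re z < Q`, the integrand defining `ln Υ_{γ/2}(z)` is integrable on `(0,∞)`. -/
theorem upsilon_integrand_integrable (γ : ℝ) (hγ : γ ∈ Set.Ioo (0:ℝ) 2) (z : ℂ)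
    (hz0 : 0 < z.re) (hzQ : z.re < γ/2 + 2/γ) :
    MeasureTheory.IntegrableOn
      (fun t : ℝ =>
        ((((γ/2 + 2/γ : ℝ) : ℂ)/2 - z)^2 * Complex.exp (-(t:ℂ))
          - (Complex.sinh ((((γ/2 + 2/γ : ℝ) : ℂ)/2 - z) * t / 2))^2
            / (Complex.sinh ((γ:ℂ) * t / 4) * Complex.sinh ((t:ℂ) / γ))) / (t:ℂ))
      (Set.Ioi 0) MeasureTheory.volume := by
  obtain ⟨hγ0, hγ2⟩ := hγ
  set Q : ℝ := γ/2 + 2/γ with hQdef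
  have hQ0 : 0 < Q := by positivity
  set a : ℂ := ((Q:ℝ):ℂ)/2 - z with hadef
  have hare : a.re = Q/2 - z.re := by simp [hadef]
  clear_value Q a
  have habs : |a.re| < Q/2 := by
    rw [abs_lt, hare]; constructor <;> linarith
  set ε : ℝ := Q/2 - |a.re| with hεdef
  have hε : 0 < ε := by simp [hεdef]; linarith
  -- measurability
  have msinh : Measurable Complex.sinh := Complex.continuous_sinh.measurable
  have mofreal : Measurable (fun t : ℝ => (t:ℂ)) := Complex.measurable_ofReal
  have hmeas : Measurable (fun t : ℝ =>
      (a^2 * Complex.exp (-(t:ℂ))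
        - (Complex.sinh (a * t / 2))^2
          / (Complex.sinh ((γ:ℂ) * t / 4) * Complex.sinh ((t:ℂ) / γ))) / (t:ℂ)) := by
    apply Measurable.div _ mofreal
    apply Measurable.sub
    · exact measurable_const.mul (Complex.measurable_exp.comp mofreal.neg)
    · apply Measurable.div
      · exact (msinh.comp ((measurable_const.mul mofreal).div_const 2)).pow measurable_const
      · exact ((msinh.comp ((measurable_const.mul mofreal).div_const 4)).mul
          (msinh.comp (mofreal.div_const (γ:ℂ))))
  rw [← Set.Ioc_union_Ioi_eq_Ioi (zero_le_one' ℝ)]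
  refine MeasureTheory.IntegrableOn.union ?_ ?_
  · -- near zero: Ioc 0 1
    set m₁ : ℝ := γ/4 with hm1
    set m₂ : ℝ := 1/γ with hm2
    set m₃ : ℝ := ‖a‖/2 with hm3
    have hm1p : (0:ℝ) < m₁ := by rw [hm1]; positivity
    have hm2p : (0:ℝ) < m₂ := by rw [hm2]; positivity
    have hm3p : (0:ℝ) ≤ m₃ := by rw [hm3]; positivity
    set K₁ : ℝ := 2*m₁^3*Real.exp m₁ with hK1
    set K₂ : ℝ := 2*m₂^3*Real.exp m₂ with hK2
    set K₃ : ℝ := 2*m₃^3*Real.exp m₃ with hK3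
    have hK1p : (0:ℝ) ≤ K₁ := by rw [hK1]; positivity
    have hK2p : (0:ℝ) ≤ K₂ := by rw [hK2]; positivity
    have hK3p : (0:ℝ) ≤ K₃ := by rw [hK3]; positivity
    set C₀ : ℝ := ‖a‖^2*(m₁*K₂ + m₂*K₁ + K₁*K₂) + ‖a‖*K₃ + K₃^2 with hC0
    have hC0p : (0:ℝ) ≤ C₀ := by rw [hC0]; positivity
    apply MeasureTheory.Measure.integrableOn_of_bounded (M := ‖a‖^2 + 4*C₀)
      measure_Ioc_lt_top.ne hmeas.aestronglyMeasurable
    rw [ae_restrict_iff' measurableSet_Ioc]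
    filter_upwards with t ht
    obtain ⟨ht0, ht1⟩ := ht
    have e1 : (γ:ℂ)*t/4 = ((γ*t/4 : ℝ):ℂ) := by push_cast; ring
    have e2 : (t:ℂ)/γ = ((t/γ : ℝ):ℂ) := by push_cast; ring
    have hs1 : Complex.sinh ((γ:ℂ)*t/4) = ((Real.sinh (γ*t/4) : ℝ):ℂ) := by
      rw [e1, Complex.ofReal_sinh]
    have hs2 : Complex.sinh ((t:ℂ)/γ) = ((Real.sinh (t/γ) : ℝ):ℂ) := by
      rw [e2, Complex.ofReal_sinh]
    have hsp1 : 0 < Real.sinh (γ*t/4) := Real.sinh_pos_iff.2 (by positivity)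
    have hsp2 : 0 < Real.sinh (t/γ) := Real.sinh_pos_iff.2 (by positivity)
    have hne1 : Complex.sinh ((γ:ℂ)*t/4) ≠ 0 := by
      rw [hs1]; exact_mod_cast hsp1.ne'
    have hne2 : Complex.sinh ((t:ℂ)/γ) ≠ 0 := by
      rw [hs2]; exact_mod_cast hsp2.ne'
    have hne : Complex.sinh ((γ:ℂ)*t/4) * Complex.sinh ((t:ℂ)/γ) ≠ 0 := mul_ne_zero hne1 hne2
    have n1 : ‖(γ:ℂ)*(t:ℂ)/4‖ = m₁ * t := by
      rw [show (γ:ℂ)*(t:ℂ)/4 = ((γ*t/4:ℝ):ℂ) by push_cast; ring, Complex.norm_real,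
        Real.norm_of_nonneg (by positivity), hm1]; ring
    have n2 : ‖(t:ℂ)/(γ:ℂ)‖ = m₂ * t := by
      rw [show (t:ℂ)/(γ:ℂ) = ((t/γ:ℝ):ℂ) by push_cast; ring, Complex.norm_real,
        Real.norm_of_nonneg (by positivity), hm2]; ring
    have n3 : ‖a*(t:ℂ)/2‖ = m₃ * t := by
      rw [show a*(t:ℂ)/2 = a * ((t/2:ℝ):ℂ) by push_cast; ring, norm_mul, Complex.norm_real,
        Real.norm_of_nonneg (by positivity), hm3]; ring
    have hE1 : ‖Complex.sinh ((γ:ℂ)*t/4) - (γ:ℂ)*t/4‖ ≤ K₁*t^3 := by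
      rw [hK1]; exact sinh_err ht0 ht1 hm1p.le n1
    have hE2 : ‖Complex.sinh ((t:ℂ)/γ) - (t:ℂ)/γ‖ ≤ K₂*t^3 := by
      rw [hK2]; exact sinh_err ht0 ht1 hm2p.le n2
    have hE3 : ‖Complex.sinh (a*(t:ℂ)/2) - a*(t:ℂ)/2‖ ≤ K₃*t^3 := by
      rw [hK3]; exact sinh_err ht0 ht1 hm3p n3
    have hγc : (γ:ℂ) ≠ 0 := Complex.ofReal_ne_zero.2 hγ0.ne'
    have key : a^2 * Complex.sinh ((γ:ℂ)*t/4) * Complex.sinh ((t:ℂ)/γ)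
          - (Complex.sinh (a*(t:ℂ)/2))^2
        = a^2*((γ:ℂ)*t/4*(Complex.sinh ((t:ℂ)/γ) - (t:ℂ)/γ)
            + (t:ℂ)/γ*(Complex.sinh ((γ:ℂ)*t/4) - (γ:ℂ)*t/4)
            + (Complex.sinh ((γ:ℂ)*t/4) - (γ:ℂ)*t/4)*(Complex.sinh ((t:ℂ)/γ) - (t:ℂ)/γ))
          - a*(t:ℂ)*(Complex.sinh (a*(t:ℂ)/2) - a*(t:ℂ)/2)
          - (Complex.sinh (a*(t:ℂ)/2) - a*(t:ℂ)/2)^2 := by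
      have hcc : (γ:ℂ)*(t:ℂ)/4 * ((t:ℂ)/(γ:ℂ)) = (t:ℂ)^2/4 := by
        field_simp
      linear_combination a^2 * hcc
    have h46 : t^6 ≤ t^4 := pow_le_pow_of_le_one ht0.le ht1 (by norm_num)
    have hN : ‖a^2 * Complex.sinh ((γ:ℂ)*t/4) * Complex.sinh ((t:ℂ)/γ)
        - (Complex.sinh (a*(t:ℂ)/2))^2‖ ≤ C₀ * t^4 := by
      rw [key]
      have hP : ‖a^2*((γ:ℂ)*t/4*(Complex.sinh ((t:ℂ)/γ) - (t:ℂ)/γ)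
            + (t:ℂ)/γ*(Complex.sinh ((γ:ℂ)*t/4) - (γ:ℂ)*t/4)
            + (Complex.sinh ((γ:ℂ)*t/4) - (γ:ℂ)*t/4)*(Complex.sinh ((t:ℂ)/γ) - (t:ℂ)/γ))‖
          ≤ ‖a‖^2 * (m₁*t*(K₂*t^3) + m₂*t*(K₁*t^3) + (K₁*t^3)*(K₂*t^3)) := by
        rw [norm_mul, norm_pow]
        gcongr
        refine (norm_add₃_le).trans ?_
        gcongr
        · rw [norm_mul, n1]
          exact mul_le_mul_of_nonneg_left hE2 (by positivity)
        · rw [norm_mul, n2]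
          exact mul_le_mul_of_nonneg_left hE1 (by positivity)
        · rw [norm_mul]
          exact mul_le_mul hE1 hE2 (norm_nonneg _) (by positivity)
      have hQ2 : ‖a*(t:ℂ)*(Complex.sinh (a*(t:ℂ)/2) - a*(t:ℂ)/2)‖ ≤ ‖a‖*t*(K₃*t^3) := by
        rw [norm_mul, norm_mul, Complex.norm_real, Real.norm_of_nonneg ht0.le]
        exact mul_le_mul_of_nonneg_left hE3 (by positivity)
      have hR : ‖(Complex.sinh (a*(t:ℂ)/2) - a*(t:ℂ)/2)^2‖ ≤ (K₃*t^3)^2 := by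
        rw [norm_pow]
        gcongr

      refine (norm_sub_sub_le _ _ _).trans ?_
      refine le_trans (add_le_add (add_le_add hP hQ2) hR) ?_
      ·
            rw [hC0]
            nlinarith [mul_le_mul_of_nonneg_left h46
                (show (0:ℝ) ≤ ‖a‖^2*(K₁*K₂) by positivity),
              mul_le_mul_of_nonneg_left h46 (show (0:ℝ) ≤ K₃^2 by positivity)]
    have hge : t^2/4 ≤ Real.sinh (γ*t/4) * Real.sinh (t/γ) := by
      have h1 : γ*t/4 ≤ Real.sinh (γ*t/4) := (Real.self_lt_sinh_iff.2 (by positivity)).le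
      have h2 : t/γ ≤ Real.sinh (t/γ) := (Real.self_lt_sinh_iff.2 (by positivity)).le
      calc t^2/4 = (γ*t/4)*(t/γ) := by field_simp
        _ ≤ Real.sinh (γ*t/4) * Real.sinh (t/γ) :=
            mul_le_mul h1 h2 (by positivity) (le_trans (by positivity) h1)
    have hdiv : ‖(a^2 * Complex.sinh ((γ:ℂ)*t/4) * Complex.sinh ((t:ℂ)/γ)
        - (Complex.sinh (a*(t:ℂ)/2))^2)
          / (Complex.sinh ((γ:ℂ)*t/4) * Complex.sinh ((t:ℂ)/γ))‖ ≤ 4*C₀*t^2 := by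
      have hdenn : ‖Complex.sinh ((γ:ℂ)*t/4) * Complex.sinh ((t:ℂ)/γ)‖
          = Real.sinh (γ*t/4) * Real.sinh (t/γ) := by
        rw [hs1, hs2, ← Complex.ofReal_mul, Complex.norm_real,
          Real.norm_of_nonneg (by positivity)]
      rw [norm_div, hdenn]
      calc _ ≤ (C₀*t^4) / (t^2/4) :=
            div_le_div₀ (by positivity) hN (by positivity) hge
        _ = 4*C₀*t^2 := by field_simp
    have hexp : ‖Complex.exp (-(t:ℂ)) - 1‖ ≤ t := by
      rw [show Complex.exp (-(t:ℂ)) = ((Real.exp (-t):ℝ):ℂ) by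
          rw [Complex.ofReal_exp, Complex.ofReal_neg],
        show ((Real.exp (-t):ℝ):ℂ) - 1 = ((Real.exp (-t) - 1 : ℝ):ℂ) by push_cast; ring,
        Complex.norm_real, Real.norm_eq_abs]
      have h1 := Real.add_one_le_exp (-t)
      have h2 : Real.exp (-t) ≤ 1 := by
        rw [show (1:ℝ) = Real.exp 0 from (Real.exp_zero).symm]
        exact Real.exp_le_exp.2 (by linarith)
      rw [abs_of_nonpos (by linarith)]
      linarith
    have hsplit : a^2 * Complex.exp (-(t:ℂ))
          - (Complex.sinh (a*(t:ℂ)/2))^2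
            / (Complex.sinh ((γ:ℂ)*t/4) * Complex.sinh ((t:ℂ)/γ))
        = a^2*(Complex.exp (-(t:ℂ)) - 1)
          + (a^2 * Complex.sinh ((γ:ℂ)*t/4) * Complex.sinh ((t:ℂ)/γ)
              - (Complex.sinh (a*(t:ℂ)/2))^2)
            / (Complex.sinh ((γ:ℂ)*t/4) * Complex.sinh ((t:ℂ)/γ)) := by
      have hcan : a^2 * Complex.sinh ((γ:ℂ)*t/4) * Complex.sinh ((t:ℂ)/γ)
          / (Complex.sinh ((γ:ℂ)*t/4) * Complex.sinh ((t:ℂ)/γ)) = a^2 := by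
        rw [mul_assoc, mul_div_assoc, div_self hne, mul_one]
      rw [sub_div, hcan]
      ring
    have htc : ‖(t:ℂ)‖ = t := by
      rw [Complex.norm_real, Real.norm_eq_abs, abs_of_pos ht0]
    have hnum : ‖a^2 * Complex.exp (-(t:ℂ))
          - (Complex.sinh (a*(t:ℂ)/2))^2
            / (Complex.sinh ((γ:ℂ)*t/4) * Complex.sinh ((t:ℂ)/γ))‖
        ≤ ‖a‖^2*t + 4*C₀*t^2 := by
      rw [hsplit]
      refine (norm_add_le _ _).trans (add_le_add ?_ hdiv)
      rw [norm_mul, norm_pow]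
      exact mul_le_mul_of_nonneg_left hexp (by positivity)
    calc ‖(a^2 * Complex.exp (-(t:ℂ))
          - (Complex.sinh (a*(t:ℂ)/2))^2
            / (Complex.sinh ((γ:ℂ)*t/4) * Complex.sinh ((t:ℂ)/γ))) / (t:ℂ)‖
        = ‖a^2 * Complex.exp (-(t:ℂ))
          - (Complex.sinh (a*(t:ℂ)/2))^2
            / (Complex.sinh ((γ:ℂ)*t/4) * Complex.sinh ((t:ℂ)/γ))‖ / t := by
          rw [norm_div, htc]
      _ ≤ (‖a‖^2*t + 4*C₀*t^2)/t := by gcongr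
      _ = ‖a‖^2 + 4*C₀*t := by field_simp
      _ ≤ ‖a‖^2 + 4*C₀ := by nlinarith
  · -- tail: Ioi 1
    set c₁ : ℝ := (1 - Real.exp (-(2*(γ/4))))/2 with hc1def
    set c₂ : ℝ := (1 - Real.exp (-(2*(1/γ))))/2 with hc2def
    have hc1 : 0 < c₁ := by
      have h : Real.exp (-(2*(γ/4))) < 1 := by
        rw [show (1:ℝ) = Real.exp 0 from (Real.exp_zero).symm]
        exact Real.exp_lt_exp.2 (neg_lt_zero.mpr (by positivity))
      rw [hc1def]; linarith
    have hc2 : 0 < c₂ := by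
      have h : Real.exp (-(2*(1/γ))) < 1 := by
        rw [show (1:ℝ) = Real.exp 0 from (Real.exp_zero).symm]
        exact Real.exp_lt_exp.2 (neg_lt_zero.mpr (by positivity))
      rw [hc2def]; linarith
    have hg : MeasureTheory.IntegrableOn
        (fun t : ℝ => ‖a‖^2 * Real.exp (-1*t) + (1/(c₁*c₂)) * Real.exp (-ε*t))
        (Set.Ioi 1) volume :=
      ((exp_neg_integrableOn_Ioi 1 one_pos).const_mul _).add
        ((exp_neg_integrableOn_Ioi 1 hε).const_mul _)
    refine MeasureTheory.Integrable.mono' hg hmeas.aestronglyMeasurable.restrict ?_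
    rw [ae_restrict_iff' measurableSet_Ioi]
    filter_upwards with t ht
    have ht1 : 1 < t := ht
    have ht0 : 0 < t := lt_trans one_pos ht1
    have e1 : (γ:ℂ)*t/4 = ((γ*t/4 : ℝ):ℂ) := by push_cast; ring
    have e2 : (t:ℂ)/γ = ((t/γ : ℝ):ℂ) := by push_cast; ring
    have hs1 : Complex.sinh ((γ:ℂ)*t/4) = ((Real.sinh (γ*t/4) : ℝ):ℂ) := by
      rw [e1, Complex.ofReal_sinh]
    have hs2 : Complex.sinh ((t:ℂ)/γ) = ((Real.sinh (t/γ) : ℝ):ℂ) := by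
      rw [e2, Complex.ofReal_sinh]
    have hd1 : c₁ * Real.exp (γ*t/4) ≤ Real.sinh (γ*t/4) :=
      real_sinh_lower (by nlinarith)
    have hd2 : c₂ * Real.exp (t/γ) ≤ Real.sinh (t/γ) :=
      real_sinh_lower (by rw [div_le_div_iff₀ hγ0 hγ0]; nlinarith)
    have hre3 : (a * (t:ℂ) / 2).re = a.re * (t/2) := by
      rw [show a * (t:ℂ)/2 = a * ((t/2:ℝ):ℂ) by push_cast; ring]
      simp [Complex.mul_re]
    have hnum : ‖Complex.sinh (a * t / 2)‖ ≤ Real.exp (|a.re| * (t/2)) := by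
      refine (norm_sinh_le_exp _).trans (Real.exp_le_exp.2 ?_)
      rw [hre3, abs_mul, abs_of_pos (show (0:ℝ) < t/2 by positivity)]
    have hX : ‖a^2 * Complex.exp (-(t:ℂ))‖ = ‖a‖^2 * Real.exp (-1*t) := by
      rw [norm_mul, norm_pow]
      congr 1
      rw [Complex.norm_exp]
      norm_num
    have hsp1 : 0 < Real.sinh (γ*t/4) := Real.sinh_pos_iff.2 (by positivity)
    have hsp2 : 0 < Real.sinh (t/γ) := Real.sinh_pos_iff.2 (by positivity)
    have hub : ‖Complex.sinh (a*t/2)‖^2 ≤ Real.exp (|a.re| * t) := by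
      calc ‖Complex.sinh (a*t/2)‖^2 ≤ (Real.exp (|a.re| * (t/2)))^2 := by
            gcongr
        _ = Real.exp (|a.re| * t) := by
            rw [sq, ← Real.exp_add]; ring_nf
    have hlb : c₁*c₂ * Real.exp (Q/2 * t) ≤ Real.sinh (γ*t/4) * Real.sinh (t/γ) := by
      have hee : Real.exp (γ*t/4) * Real.exp (t/γ) = Real.exp (Q/2*t) := by
        rw [← Real.exp_add]; congr 1; rw [hQdef]; field_simp; ring
      have heq : c₁*c₂*Real.exp (Q/2*t) = (c₁*Real.exp (γ*t/4))*(c₂*Real.exp (t/γ)) := by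
        rw [← hee]; ring
      rw [heq]
      exact mul_le_mul hd1 hd2 (by positivity) hsp1.le
    have hY : ‖(Complex.sinh (a*t/2))^2 /
        (Complex.sinh ((γ:ℂ)*t/4) * Complex.sinh ((t:ℂ)/γ))‖
        ≤ (1/(c₁*c₂)) * Real.exp (-ε*t) := by
      rw [norm_div, norm_pow, hs1, hs2, ← Complex.ofReal_mul, Complex.norm_real,
        Real.norm_eq_abs, abs_of_pos (by positivity)]
      calc ‖Complex.sinh (a*t/2)‖^2 / (Real.sinh (γ*t/4) * Real.sinh (t/γ))
          ≤ Real.exp (|a.re| * t) / (c₁*c₂ * Real.exp (Q/2*t)) :=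
            div_le_div₀ (Real.exp_pos _).le hub (by positivity) hlb
        _ = (1/(c₁*c₂)) * Real.exp (-ε*t) := by
            rw [show -ε*t = |a.re| * t - Q/2*t by rw [hεdef]; ring, Real.exp_sub]
            field_simp
    have htc : ‖(t:ℂ)‖ = t := by
      rw [Complex.norm_real, Real.norm_eq_abs, abs_of_pos ht0]
    calc ‖(a^2 * Complex.exp (-(t:ℂ)) - (Complex.sinh (a * t / 2))^2
            / (Complex.sinh ((γ:ℂ) * t / 4) * Complex.sinh ((t:ℂ) / γ))) / (t:ℂ)‖
        = ‖a^2 * Complex.exp (-(t:ℂ)) - (Complex.sinh (a * t / 2))^2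
            / (Complex.sinh ((γ:ℂ) * t / 4) * Complex.sinh ((t:ℂ) / γ))‖ / t := by
          rw [norm_div, htc]
      _ ≤ ‖a^2 * Complex.exp (-(t:ℂ)) - (Complex.sinh (a * t / 2))^2
            / (Complex.sinh ((γ:ℂ) * t / 4) * Complex.sinh ((t:ℂ) / γ))‖ :=
          div_le_self (norm_nonneg _) ht1.le
      _ ≤ ‖a^2 * Complex.exp (-(t:ℂ))‖ + ‖(Complex.sinh (a * t / 2))^2
            / (Complex.sinh ((γ:ℂ) * t / 4) * Complex.sinh ((t:ℂ) / γ))‖ :=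
          norm_sub_le _ _
      _ ≤ ‖a‖^2 * Real.exp (-1*t) + (1/(c₁*c₂)) * Real.exp (-ε*t) := by
          rw [hX]; gcongr
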